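/- arXiv:2603.16182 — 4 statements merged into one kernel-verified Lean document; each statement's English description precedes it below -/
import Mathlib

section
/- For the multi-agent system ẋ_i = A x_i + B u_i, i = 1,...,N, with a communication graph admitting a directed spanning tree rooted at N whose root is also a root vertex of the original graph, the decentralized protocol u_N = 0, u_i = K_i w_{i,p(i)} (x_{p(i)} - x_i) for i < N achieves asymptotic state consensus (x_i(t) - x_j(t) → 0 for all i,j and all initial conditions), provided each matrix A - w_{i,p(i)} B K_i is Hurwitz, where p(i) is the parent of i in the spanning tree and w_{i,p(i)} > 0. -/
open Filter

open Matrix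

/-- exponential average of a vanishing function vanishes -/
lemma L0 {r : ℝ} (hr : 0 < r) {G : ℝ → ℝ} (hGc : Continuous G) (hG0 : ∀ s, 0 ≤ G s)
    (hG : Tendsto G atTop (nhds 0)) :
    Tendsto (fun t => Real.exp (-r * t) * ∫ s in (0:ℝ)..t, Real.exp (r * s) * G s)
      atTop (nhds 0) := by
  have hint : ∀ a b : ℝ, IntervalIntegrable (fun s => Real.exp (r * s) * G s) MeasureTheory.volume a b :=
    fun a b => (Continuous.mul (by continuity) hGc).intervalIntegrable a b
  rw [Metric.tendsto_atTop]
  intro ε hε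
  obtain ⟨T₀, hT₀⟩ := (Metric.tendsto_atTop.1 hG (r * ε / 4) (by positivity))
  set T := max T₀ 0 with hTdef
  have hT : ∀ s ≥ T, G s ≤ r * ε / 4 := by
    intro s hs
    have := hT₀ s (le_trans (le_max_left _ _) hs)
    rw [Real.dist_eq, sub_zero, abs_of_nonneg (hG0 s)] at this
    exact this.le
  have hT0 : (0:ℝ) ≤ T := le_max_right _ _
  set C := ∫ s in (0:ℝ)..T, Real.exp (r * s) * G s with hC
  have hCnn : 0 ≤ C := intervalIntegral.integral_nonneg hT0
    (fun s _ => mul_nonneg (Real.exp_nonneg _) (hG0 s))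
  have h1 : Tendsto (fun t => Real.exp (-r * t) * (C + 1)) atTop (nhds 0) := by
    have h2 : Tendsto (fun t : ℝ => Real.exp (-r * t)) atTop (nhds 0) :=
      Real.tendsto_exp_atBot.comp
        (tendsto_id.const_mul_atTop_of_neg (neg_lt_zero.2 hr))
    simpa using h2.mul_const (C + 1)
  obtain ⟨T₂, hT₂⟩ := Metric.tendsto_atTop.1 h1 (ε / 2) (by positivity)
  refine ⟨max T T₂, fun t ht => ?_⟩
  have htT : T ≤ t := le_trans (le_max_left _ _) ht
  have htT₂ : T₂ ≤ t := le_trans (le_max_right _ _) ht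
  set I := ∫ s in T..t, Real.exp (r * s) * G s with hI
  have hInn : 0 ≤ I := intervalIntegral.integral_nonneg htT
    (fun s _ => mul_nonneg (Real.exp_nonneg _) (hG0 s))
  have hsplit : ∫ s in (0:ℝ)..t, Real.exp (r * s) * G s = C + I := by
    rw [hC, hI, intervalIntegral.integral_add_adjacent_intervals (hint 0 T) (hint T t)]
  have hbound : I ≤ ∫ s in T..t, Real.exp (r * s) * (r * ε / 4) := by
    apply intervalIntegral.integral_mono_on htT (hint T t)
      ((Continuous.mul (by continuity) continuous_const).intervalIntegrable T t)
    intro s hs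
    exact mul_le_mul_of_nonneg_left (hT s hs.1) (Real.exp_nonneg _)
  have hcalc : ∫ s in T..t, Real.exp (r * s) * (r * ε / 4)
      = (Real.exp (r * t) - Real.exp (r * T)) / r * (r * ε / 4) := by
    rw [intervalIntegral.integral_mul_const]
    congr 1
    have hd : ∀ u : ℝ, HasDerivAt (fun s => Real.exp (r * s) / r) (Real.exp (r * u)) u := by
      intro u
      have h1 : HasDerivAt (fun s : ℝ => r * s) r u := by
        simpa using (hasDerivAt_id u).const_mul r
      have := (h1.exp).div_const r
      simpa [mul_comm, mul_div_assoc, mul_div_cancel_left₀ _ (ne_of_gt hr)] using this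
    rw [intervalIntegral.integral_eq_sub_of_hasDerivAt (fun u _ => hd u)
      ((by continuity : Continuous fun s : ℝ => Real.exp (r * s)).intervalIntegrable T t)]
    ring
  have hb2 : Real.exp (-r * t) * I ≤ ε / 2 := by
    have h3 : I ≤ Real.exp (r * t) / r * (r * ε / 4) := by
      refine le_trans (hbound.trans (le_of_eq hcalc)) ?_
      apply mul_le_mul_of_nonneg_right _ (by positivity)
      apply div_le_div_of_nonneg_right _ hr.le
      linarith [Real.exp_pos (r * T)]
    have h4 : Real.exp (-r * t) * (Real.exp (r * t) / r * (r * ε / 4)) = ε / 4 := by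
      rw [neg_mul, Real.exp_neg]
      field_simp
    calc Real.exp (-r * t) * I ≤ Real.exp (-r * t) * (Real.exp (r * t) / r * (r * ε / 4)) :=
          mul_le_mul_of_nonneg_left h3 (Real.exp_nonneg _)
      _ = ε / 4 := h4
      _ ≤ ε / 2 := by linarith
  have hb1 : Real.exp (-r * t) * C ≤ Real.exp (-r * t) * (C + 1) := by
    apply mul_le_mul_of_nonneg_left (by linarith) (Real.exp_nonneg _)
  have hb1' : Real.exp (-r * t) * (C + 1) < ε / 2 := by
    have := hT₂ t htT₂
    rwa [Real.dist_eq, sub_zero, abs_of_nonneg (by positivity)] at this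
  rw [Real.dist_eq, sub_zero, hsplit]
  have : Real.exp (-r * t) * (C + I) = Real.exp (-r * t) * C + Real.exp (-r * t) * I := by ring
  rw [abs_of_nonneg (by positivity)]
  linarith [this]


lemma L1 {a : ℂ} (ha : a.re < 0) {g : ℝ → ℂ} (hgc : Continuous g)
    (hg : Tendsto g atTop (nhds 0)) {y : ℝ → ℂ}
    (hy : ∀ t, HasDerivAt y (a * y t + g t) t) :
    Tendsto y atTop (nhds 0) := by
  set E : ℝ → ℂ := fun t => Complex.exp (-(a * t)) with hEdef
  have hlin : ∀ t : ℝ, HasDerivAt (fun s : ℝ => a * (s : ℂ)) a t := by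
    intro t
    simpa using (Complex.ofRealCLM.hasDerivAt (x := t)).const_mul a
  have hE : ∀ t, HasDerivAt E (-a * E t) t := by
    intro t
    simpa [hEdef, mul_comm] using ((hlin t).neg).cexp
  have hyc : Continuous y := by
    rw [continuous_iff_continuousAt]; exact fun t => (hy t).continuousAt
  have hEc : Continuous E := by continuity
  have hh : ∀ t, HasDerivAt (fun s => E s * y s) (E t * g t) t := by
    intro t
    have := (hE t).fun_mul (hy t)
    exact this.congr_deriv (by ring)
  have hrepr : ∀ t : ℝ, y t = Complex.exp (a * t) * (E 0 * y 0 + ∫ s in (0:ℝ)..t, E s * g s) := by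
    intro t
    have := intervalIntegral.integral_eq_sub_of_hasDerivAt (fun u _ => hh u)
      ((hEc.mul hgc).intervalIntegrable 0 t)
    rw [this]
    have hinv : Complex.exp (a * t) * E t = 1 := by
      rw [hEdef]; rw [← Complex.exp_add]; simp
    have : Complex.exp (a * t) * (E 0 * y 0 + (E t * y t - E 0 * y 0))
        = (Complex.exp (a * t) * E t) * y t := by ring
    rw [this, hinv, one_mul]
  set r : ℝ := -a.re with hrdef
  have hr : 0 < r := by simp [hrdef]; linarith
  have hnorm_exp : ∀ t : ℝ, ‖Complex.exp (a * t)‖ = Real.exp (-r * t) := by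
    intro t
    rw [Complex.norm_exp]
    congr 1
    simp [hrdef, Complex.mul_re]
  have hterm1 : Tendsto (fun t : ℝ => Complex.exp (a * t) * (E 0 * y 0)) atTop (nhds 0) := by
    apply squeeze_zero_norm (a := fun t : ℝ => Real.exp (-r * t) * ‖E 0 * y 0‖)
    · intro t; rw [norm_mul, hnorm_exp]
    · have h2 : Tendsto (fun t : ℝ => Real.exp (-r * t)) atTop (nhds 0) :=
        Real.tendsto_exp_atBot.comp (tendsto_id.const_mul_atTop_of_neg (neg_lt_zero.2 hr))
      simpa using h2.mul_const _
  have hterm2 : Tendsto (fun t : ℝ => Complex.exp (a * t) * ∫ s in (0:ℝ)..t, E s * g s) atTop (nhds 0) := by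
    apply squeeze_zero_norm' (a := fun t : ℝ => Real.exp (-r * t) * ∫ s in (0:ℝ)..t, Real.exp (r * s) * ‖g s‖)
    · filter_upwards [eventually_ge_atTop (0:ℝ)] with t ht
      rw [norm_mul, hnorm_exp]
      apply mul_le_mul_of_nonneg_left _ (Real.exp_nonneg _)
      refine le_trans (intervalIntegral.norm_integral_le_integral_norm ht) ?_
      apply le_of_eq
      apply intervalIntegral.integral_congr
      intro s _
      show ‖E s * g s‖ = Real.exp (r * s) * ‖g s‖
      rw [norm_mul, hEdef]
      congr 1
      rw [Complex.norm_exp]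
      congr 1
      simp [hrdef, Complex.mul_re]
    · exact L0 hr hgc.norm (fun s => norm_nonneg _)
        (by have := (continuous_norm.tendsto (0:ℂ)).comp hg; simp only [norm_zero] at this; exact this)
  have : (fun t : ℝ => Complex.exp (a * t) * (E 0 * y 0) + Complex.exp (a * t) * ∫ s in (0:ℝ)..t, E s * g s)
      = y := by
    funext t; rw [hrepr t]; ring
  rw [← this]
  simpa using hterm1.add hterm2

lemma eig_mem_spectrum {ι : Type*} [Fintype ι] [DecidableEq ι] (M : Matrix ι ι ℂ) {μ : ℂ}
    {v : ι → ℂ} (hv : v ≠ 0) (h : M.mulVec v = μ • v) : μ ∈ spectrum ℂ M := by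
  rw [spectrum.mem_iff]
  intro hU
  apply hv
  have h0 : (algebraMap ℂ (Matrix ι ι ℂ) μ - M).mulVec v = 0 := by
    rw [Matrix.sub_mulVec, Algebra.algebraMap_eq_smul_one, Matrix.smul_mulVec,
      Matrix.one_mulVec, h, sub_self]
  obtain ⟨u, hu⟩ := hU
  have hum : ((u⁻¹ : (Matrix ι ι ℂ)ˣ) : Matrix ι ι ℂ) * (u : Matrix ι ι ℂ) = 1 := u.inv_mul
  calc v = (1 : Matrix ι ι ℂ).mulVec v := (Matrix.one_mulVec v).symm
    _ = (((u⁻¹ : (Matrix ι ι ℂ)ˣ) : Matrix ι ι ℂ) * (u : Matrix ι ι ℂ)).mulVec v := by rw [hum]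
    _ = ((u⁻¹ : (Matrix ι ι ℂ)ˣ) : Matrix ι ι ℂ).mulVec ((u : Matrix ι ι ℂ).mulVec v) := by
        rw [Matrix.mulVec_mulVec]
    _ = 0 := by rw [hu, h0, Matrix.mulVec_zero]

lemma spectrum_has_eig {ι : Type*} [Fintype ι] [DecidableEq ι] {M : Matrix ι ι ℂ} {μ : ℂ}
    (h : μ ∈ spectrum ℂ M) : ∃ v, v ≠ 0 ∧ M.mulVec v = μ • v := by
  rw [spectrum.mem_iff] at h
  have hdet : (algebraMap ℂ (Matrix ι ι ℂ) μ - M).det = 0 := by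
    by_contra hd
    exact h ((Matrix.isUnit_iff_isUnit_det _).2 (isUnit_iff_ne_zero.2 hd))
  obtain ⟨v, hv, h0⟩ := (Matrix.exists_mulVec_eq_zero_iff).2 hdet
  refine ⟨v, hv, ?_⟩
  rw [Matrix.sub_mulVec, Algebra.algebraMap_eq_smul_one, Matrix.smul_mulVec,
    Matrix.one_mulVec, sub_eq_zero] at h0
  exact h0.symm

lemma spectrum_transpose_subset {ι : Type*} [Fintype ι] [DecidableEq ι] (M : Matrix ι ι ℂ) :
    spectrum ℂ Mᵀ ⊆ spectrum ℂ M := by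
  intro μ hμ
  rw [spectrum.mem_iff] at hμ ⊢
  intro hU
  apply hμ
  have ht : (algebraMap ℂ (Matrix ι ι ℂ) μ - M)ᵀ = algebraMap ℂ (Matrix ι ι ℂ) μ - Mᵀ := by
    rw [Matrix.transpose_sub]
    congr 1
    rw [Algebra.algebraMap_eq_smul_one, Matrix.transpose_smul, Matrix.transpose_one]
  rw [Matrix.isUnit_iff_isUnit_det] at hU ⊢
  rw [← ht, Matrix.det_transpose]
  exact hU

lemma exists_left_eig {ι : Type*} [Fintype ι] [DecidableEq ι] [Nonempty ι] (M : Matrix ι ι ℂ) :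
    ∃ (μ : ℂ) (v : ι → ℂ), v ≠ 0 ∧ Mᵀ.mulVec v = μ • v ∧ μ ∈ spectrum ℂ M := by
  obtain ⟨μ, hμ⟩ := Module.End.exists_eigenvalue (Matrix.toLin' Mᵀ)
  obtain ⟨v, hv⟩ := hμ.exists_hasEigenvector
  refine ⟨μ, v, hv.2, ?_, ?_⟩
  · have := hv.apply_eq_smul
    rwa [Matrix.toLin'_apply] at this
  · apply spectrum_transpose_subset
    apply eig_mem_spectrum Mᵀ hv.2
    have := hv.apply_eq_smul
    rwa [Matrix.toLin'_apply] at this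

lemma decay_aux : ∀ (k : ℕ) (ι : Type) (_ : Fintype ι) (_ : DecidableEq ι),
    Fintype.card ι = k → ∀ (M : Matrix ι ι ℂ) (f y : ℝ → ι → ℂ),
    (∀ μ ∈ spectrum ℂ M, μ.re < 0) → Continuous f → Tendsto f atTop (nhds 0) →
    (∀ t, HasDerivAt y (M.mulVec (y t) + f t) t) →
    Tendsto y atTop (nhds 0) := by
  intro k
  induction k with
  | zero =>
    intro ι _ _ hcard M f y _ _ _ _
    have he : IsEmpty ι := Fintype.card_eq_zero_iff.1 hcard
    have hy0 : y = fun _ => 0 := by funext t i; exact he.elim i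
    rw [hy0]; exact tendsto_const_nhds
  | succ k IH =>
    intro ι instF instD hcard M f y hspec hfc hf hy
    have hne : Nonempty ι := Fintype.card_pos_iff.1 (by omega)
    obtain ⟨lam, v, hv0, hveq, hlam⟩ := exists_left_eig M
    have hlamre : lam.re < 0 := hspec lam hlam
    obtain ⟨k0, hk0⟩ : ∃ i, v i ≠ 0 := by
      by_contra h; push_neg at h; exact hv0 (funext h)
    set w : ι → ℂ := (v k0)⁻¹ • v with hwdef
    have hwk : w k0 = 1 := by simp [hwdef, inv_mul_cancel₀ hk0]
    have hweq : Mᵀ.mulVec w = lam • w := by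
      rw [hwdef, Matrix.mulVec_smul, hveq, smul_comm]
    -- key sum-swap identity
    have hMw : ∀ u : ι → ℂ, ∑ l, w l * (M.mulVec u) l = lam * ∑ l, w l * u l := by
      intro u
      calc ∑ l, w l * (M.mulVec u) l = ∑ l, ∑ j, w l * (M l j * u j) := by
            simp [Matrix.mulVec, dotProduct, Finset.mul_sum]
        _ = ∑ j, ∑ l, w l * (M l j * u j) := Finset.sum_comm
        _ = ∑ j, (Mᵀ.mulVec w) j * u j := by
            apply Finset.sum_congr rfl
            intro j _
            simp [Matrix.mulVec, dotProduct, Finset.sum_mul, Matrix.transpose_apply]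
            apply Finset.sum_congr rfl
            intro l _
            ring
        _ = lam * ∑ j, w j * u j := by
            rw [hweq]
            simp [Finset.mul_sum]
            apply Finset.sum_congr rfl
            intro j _
            ring
    -- sum splitting
    have sumsplit : ∀ g : ι → ℂ, ∑ l, g l = g k0 + ∑ l : {l : ι // l ≠ k0}, g l.1 := by
      intro g
      rw [← Finset.sum_subtype (Finset.univ.erase k0) (fun x => by simp) g]
      rw [Finset.add_sum_erase _ g (Finset.mem_univ k0)]
    -- scalar component
    set z : ℝ → ℂ := fun t => ∑ l, w l * y t l with hzdef
    have hyl : ∀ (l : ι) (t : ℝ), HasDerivAt (fun s => y s l) ((M.mulVec (y t) + f t) l) t :=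
      fun l t => hasDerivAt_pi.1 (hy t) l
    have hz : ∀ t, HasDerivAt z (lam * z t + ∑ l, w l * f t l) t := by
      intro t
      have h1 : HasDerivAt z (∑ l, w l * (M.mulVec (y t) + f t) l) t := by
        rw [hzdef]
        exact HasDerivAt.fun_sum (fun l _ => (hyl l t).const_mul (w l))
      convert h1 using 1
      simp only [Pi.add_apply, mul_add, Finset.sum_add_distrib, hMw (y t)]
      rfl
    have hycont : ∀ l : ι, Continuous fun t => y t l := by
      intro l
      rw [continuous_iff_continuousAt]
      exact fun t => (hyl l t).continuousAt
    have hzc : Continuous z := by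
      rw [hzdef]; exact continuous_finset_sum _ (fun l _ => continuous_const.mul (hycont l))
    have hfl : ∀ l : ι, Tendsto (fun t => f t l) atTop (nhds 0) :=
      fun l => (tendsto_pi_nhds.1 hf) l
    have hflc : ∀ l : ι, Continuous fun t => f t l :=
      fun l => (continuous_apply l).comp hfc
    have hz0 : Tendsto z atTop (nhds 0) := by
      apply L1 hlamre (g := fun t => ∑ l, w l * f t l)
      · exact continuous_finset_sum _ (fun l _ => continuous_const.mul (hflc l))
      · have : Tendsto (fun t => ∑ l, w l * f t l) atTop (nhds (∑ l : ι, w l * (0:ℂ))) :=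
          tendsto_finset_sum _ (fun l _ => (hfl l).const_mul _)
        simpa using this
      · exact hz
    -- identity for y at k0
    have hk0id : ∀ t, y t k0 = z t - ∑ l : {l : ι // l ≠ k0}, w l.1 * y t l.1 := by
      intro t
      have := sumsplit (fun l => w l * y t l)
      rw [hwk, one_mul] at this
      rw [hzdef]
      simp only [this]
      ring
    -- reduced system
    set ι' := {l : ι // l ≠ k0} with hι'
    set M' : Matrix ι' ι' ℂ := fun j l => M j.1 l.1 - M j.1 k0 * w l.1 with hM'
    set F : ℝ → ι' → ℂ := fun t j => M j.1 k0 * z t + f t j.1 with hF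
    set Y : ℝ → ι' → ℂ := fun t j => y t j.1 with hY
    have hcard' : Fintype.card ι' = k := by
      have h1 := Fintype.card_subtype_compl (fun l : ι => l = k0)
      rw [Fintype.card_subtype_eq] at h1
      have h2 : Fintype.card ι' = Fintype.card {l : ι // ¬ l = k0} := rfl
      omega
    -- spectrum of M'
    have hspec' : ∀ μ ∈ spectrum ℂ M', μ.re < 0 := by
      intro μ hμ
      obtain ⟨x, hx0, hxeq⟩ := spectrum_has_eig hμ
      classical
      set xt : ι → ℂ := fun l => if h : l = k0 then -(∑ j : ι', w j.1 * x j) else x ⟨l, h⟩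
        with hxt
      have hxtk0 : xt k0 = -(∑ j : ι', w j.1 * x j) := by simp [hxt]
      have hxtne : ∀ (j : ι'), xt j.1 = x j := by
        intro j
        simp only [hxt, dif_neg j.2]
        rfl
      have hwxt : ∑ l, w l * xt l = 0 := by
        rw [sumsplit (fun l => w l * xt l), hwk, one_mul, hxtk0]
        simp only [hxtne]
        ring
      have hrow : ∀ (j : ι'), (M.mulVec xt) j.1 = μ * xt j.1 := by
        intro j
        have h1 : (M.mulVec xt) j.1 = M j.1 k0 * xt k0 + ∑ l : ι', M j.1 l.1 * xt l.1 := by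
          rw [show (M.mulVec xt) j.1 = ∑ l, M j.1 l * xt l from by
            simp [Matrix.mulVec, dotProduct]]
          exact sumsplit _
        have h2 : (M'.mulVec x) j = μ * x j := by rw [hxeq]; simp
        rw [show (M'.mulVec x) j = ∑ l : ι', (M j.1 l.1 - M j.1 k0 * w l.1) * x l from by
          simp [hM', Matrix.mulVec, dotProduct]] at h2
        have h3 : ∑ l : ι', (M j.1 l.1 - M j.1 k0 * w l.1) * x l
            = (∑ l : ι', M j.1 l.1 * x l) - M j.1 k0 * ∑ l : ι', w l.1 * x l := by
          rw [Finset.mul_sum, ← Finset.sum_sub_distrib]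
          apply Finset.sum_congr rfl
          intro l _
          ring
        rw [h3] at h2
        rw [h1, hxtk0, hxtne j]
        simp only [hxtne]
        rw [← h2]
        ring
      have hfull : M.mulVec xt = μ • xt := by
        funext l
        by_cases h : l = k0
        · subst h
          have hA : ∑ i, w i * ((M.mulVec xt) i - μ * xt i) = 0 := by
            have e1 : ∑ i, w i * ((M.mulVec xt) i - μ * xt i)
                = (∑ i, w i * (M.mulVec xt) i) - μ * ∑ i, w i * xt i := by
              rw [Finset.mul_sum, ← Finset.sum_sub_distrib]
              apply Finset.sum_congr rfl
              intro i _
              ring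
            rw [e1, hMw xt, hwxt]
            ring
          have e2 : ∑ i, w i * ((M.mulVec xt) i - μ * xt i)
              = (M.mulVec xt) l - μ * xt l := by
            rw [sumsplit (fun i => w i * ((M.mulVec xt) i - μ * xt i)), hwk, one_mul]
            have : ∀ j : ι', w j.1 * ((M.mulVec xt) j.1 - μ * xt j.1) = 0 := by
              intro j
              rw [hrow j]
              ring
            rw [Finset.sum_congr rfl (fun j _ => this j)]
            simp
          have := e2 ▸ hA
          have h4 : (M.mulVec xt) l = μ * xt l := by linear_combination this
          rw [h4]
          simp
        · have := hrow ⟨l, h⟩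
          simpa using this
      have hxt0 : xt ≠ 0 := by
        obtain ⟨j, hj⟩ : ∃ j : ι', x j ≠ 0 := by
          by_contra hcon
          push_neg at hcon
          exact hx0 (funext hcon)
        intro hh
        apply hj
        rw [← hxtne j, hh]
        rfl
      exact hspec μ (eig_mem_spectrum M hxt0 hfull)
    -- derivative of reduced system
    have hY' : ∀ t, HasDerivAt Y (M'.mulVec (Y t) + F t) t := by
      intro t
      apply hasDerivAt_pi.2
      intro j
      have h0 := hyl j.1 t
      have heq : (M'.mulVec (Y t) + F t) j = (M.mulVec (y t) + f t) j.1 := by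
        simp only [Pi.add_apply]
        have h1 : (M.mulVec (y t)) j.1 = M j.1 k0 * y t k0 + ∑ l : ι', M j.1 l.1 * y t l.1 := by
          rw [show (M.mulVec (y t)) j.1 = ∑ l, M j.1 l * y t l from by
            simp [Matrix.mulVec, dotProduct]]
          exact sumsplit _
        have h2 : (M'.mulVec (Y t)) j = ∑ l : ι', (M j.1 l.1 - M j.1 k0 * w l.1) * y t l.1 := by
          simp [hM', hY, Matrix.mulVec, dotProduct]
        have h3 : ∑ l : ι', (M j.1 l.1 - M j.1 k0 * w l.1) * y t l.1
            = (∑ l : ι', M j.1 l.1 * y t l.1) - M j.1 k0 * ∑ l : ι', w l.1 * y t l.1 := by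
          rw [Finset.mul_sum, ← Finset.sum_sub_distrib]
          apply Finset.sum_congr rfl
          intro l _
          ring
        rw [h1, h2, h3]
        have h5 : F t j = M j.1 k0 * z t + f t j.1 := rfl
        rw [h5, hk0id t]
        ring
      rw [heq]
      exact h0
    have hFc : Continuous F := by
      apply continuous_pi
      intro j
      exact (continuous_const.mul hzc).add (hflc j.1)
    have hF0 : Tendsto F atTop (nhds 0) := by
      rw [tendsto_pi_nhds]
      intro j
      have := (hz0.const_mul (M j.1 k0)).add (hfl j.1)
      simpa using this
    have hY0 : Tendsto Y atTop (nhds 0) :=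
      IH ι' inferInstance inferInstance hcard' M' F Y hspec' hFc hF0 hY'
    rw [tendsto_pi_nhds]
    intro i
    by_cases hi : i = k0
    · subst hi
      have hid : (fun t => y t i) = fun t => z t - ∑ j : ι', w j.1 * Y t j := by
        funext t
        exact hk0id t
      rw [hid]
      have hsum : Tendsto (fun t => ∑ j : ι', w j.1 * Y t j) atTop (nhds 0) := by
        have := tendsto_finset_sum (Finset.univ : Finset ι')
          (fun (j : ι') _ => ((tendsto_pi_nhds.1 hY0) j).const_mul (w j.1))
        simpa using this
      simpa using hz0.sub hsum
    · exact (tendsto_pi_nhds.1 hY0) ⟨i, hi⟩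

/-- A real square matrix is Hurwitz if every complex eigenvalue has negative real part. -/
def IsHurwitzR {ι : Type*} [Fintype ι] [DecidableEq ι] (M : Matrix ι ι ℝ) : Prop :=
  ∀ μ ∈ spectrum ℂ (M.map (Complex.ofReal ·)), μ.re < 0

lemma decay_real {n : ℕ} {M : Matrix (Fin n) (Fin n) ℝ} (hM : IsHurwitzR M)
    {f y : ℝ → Fin n → ℝ} (hfc : Continuous f) (hf : Tendsto f atTop (nhds 0))
    (hy : ∀ t, HasDerivAt y (M.mulVec (y t) + f t) t) :
    Tendsto y atTop (nhds 0) := by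
  set Mc := M.map (Complex.ofReal ·) with hMc
  set fc : ℝ → Fin n → ℂ := fun t i => (f t i : ℂ) with hfcdef
  set yc : ℝ → Fin n → ℂ := fun t i => (y t i : ℂ) with hycdef
  have hcast : ∀ (v : Fin n → ℝ) (i : Fin n),
      (Mc.mulVec (fun j => (v j : ℂ))) i = ((M.mulVec v) i : ℂ) := by
    intro v i
    simp only [hMc, Matrix.mulVec, dotProduct, Matrix.map_apply]
    push_cast
    rfl
  have hyc : ∀ t, HasDerivAt yc (Mc.mulVec (yc t) + fc t) t := by
    intro t
    apply hasDerivAt_pi.2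
    intro i
    have h0 := hasDerivAt_pi.1 (hy t) i
    have h1 : HasDerivAt (fun s => ((y s i : ℂ)))
        (((M.mulVec (y t) + f t) i : ℂ)) t :=
      Complex.ofRealCLM.hasFDerivAt.comp_hasDerivAt t h0
    have h2 : (Mc.mulVec (yc t) + fc t) i = ((M.mulVec (y t) + f t) i : ℂ) := by
      simp only [Pi.add_apply, hycdef, hfcdef]
      push_cast
      rw [hcast (y t) i]
    rw [h2]
    exact h1
  have hfcc : Continuous fc := by
    apply continuous_pi
    intro i
    exact Complex.continuous_ofReal.comp ((continuous_apply i).comp hfc)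
  have hfc0 : Tendsto fc atTop (nhds 0) := by
    rw [tendsto_pi_nhds]
    intro i
    have := (Complex.continuous_ofReal.tendsto 0).comp ((tendsto_pi_nhds.1 hf) i)
    simpa [hfcdef, Function.comp_def] using this
  have hyc0 : Tendsto yc atTop (nhds 0) :=
    decay_aux (Fintype.card (Fin n)) (Fin n) _ _ rfl Mc fc yc hM hfcc hfc0 hyc
  rw [tendsto_pi_nhds]
  intro i
  have := (Complex.continuous_re.tendsto 0).comp ((tendsto_pi_nhds.1 hyc0) i)
  simpa [hycdef, Function.comp_def] using this

lemma mulVec_tendsto_zero {n m : ℕ} (M : Matrix (Fin n) (Fin m) ℝ) {v : ℝ → Fin m → ℝ}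
    (h : Tendsto v atTop (nhds 0)) :
    Tendsto (fun t => M.mulVec (v t)) atTop (nhds 0) := by
  rw [tendsto_pi_nhds]
  intro i
  have he : (fun t => (M.mulVec (v t)) i) = fun t => ∑ j, M i j * v t j := by
    funext t
    simp [Matrix.mulVec, dotProduct]
  rw [he]
  have := tendsto_finset_sum (Finset.univ : Finset (Fin m))
    (fun j _ => ((tendsto_pi_nhds.1 h) j).const_mul (M i j))
  simpa using this

lemma mulVec_continuous' {n m : ℕ} (M : Matrix (Fin n) (Fin m) ℝ) {v : ℝ → Fin m → ℝ}
    (h : Continuous v) : Continuous (fun t => M.mulVec (v t)) := by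
  apply continuous_pi
  intro i
  have he : (fun t => (M.mulVec (v t)) i) = fun t => ∑ j, M i j * v t j := by
    funext t
    simp [Matrix.mulVec, dotProduct]
  rw [he]
  exact continuous_finset_sum _ (fun j _ =>
    continuous_const.mul ((continuous_apply j).comp h))

/-- Agents `x i`, `i : Fin (N+1)`, have identical linear dynamics
`ẋ_i = A x_i + B u_i`.  The communication graph has nonnegative weights `w` and admits a
directed spanning tree rooted at the last vertex, with parent map `p` satisfying
`p i > i` and tree edge weights `w i (p i) > 0`; the root of the tree is also a root
vertex of the graph (it can reach every vertex along graph edges).  Under the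
decentralized protocol `u_root = 0`, `u_i = K_i w_{i,p(i)} (x_{p(i)} - x_i)`, if each
`A - w_{i,p(i)} B K_i` is Hurwitz then the system achieves asymptotic state consensus:
`x_i(t) - x_j(t) → 0` for all `i, j` and all initial conditions. -/
theorem stmt6 {N n m : ℕ}
    (A : Matrix (Fin n) (Fin n) ℝ) (B : Matrix (Fin n) (Fin m) ℝ)
    (w : Fin (N + 1) → Fin (N + 1) → ℝ) (hw : ∀ i j, 0 ≤ w i j)
    (p : Fin N → Fin (N + 1))
    (hp : ∀ i : Fin N, i.castSucc < p i)
    (hwt : ∀ i : Fin N, 0 < w i.castSucc (p i))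
    (hrootgraph : ∀ v : Fin (N + 1), v ≠ Fin.last N →
      ∃ (L : ℕ) (path : ℕ → Fin (N + 1)), path 0 = Fin.last N ∧ path L = v ∧
        ∀ l < L, 0 < w (path (l + 1)) (path l))
    (K : Fin N → Matrix (Fin m) (Fin n) ℝ)
    (hHur : ∀ i : Fin N, IsHurwitzR (A - w i.castSucc (p i) • (B * K i)))
    (x : Fin (N + 1) → ℝ → (Fin n → ℝ))
    (hroot : ∀ t, HasDerivAt (x (Fin.last N)) (A.mulVec (x (Fin.last N) t)) t)
    (hdyn : ∀ (i : Fin N) (t : ℝ),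
      HasDerivAt (x i.castSucc)
        (A.mulVec (x i.castSucc t) +
          B.mulVec ((K i).mulVec
            (w i.castSucc (p i) • (x (p i) t - x i.castSucc t)))) t) :
    ∀ i j : Fin (N + 1), Tendsto (fun t => x i t - x j t) atTop (nhds 0) := by
  classical
  -- errors along tree edges
  set e : Fin N → ℝ → Fin n → ℝ := fun i t => x i.castSucc t - x (p i) t with hedef
  -- continuity of trajectories
  have hxc : ∀ v : Fin (N + 1), Continuous (x v) := by
    intro v
    rw [continuous_iff_continuousAt]
    intro t
    by_cases h : v = Fin.last N
    · subst h; exact (hroot t).continuousAt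
    · obtain ⟨i, hi⟩ : ∃ i : Fin N, i.castSucc = v :=
        ⟨v.castPred h, Fin.castSucc_castPred v h⟩
      subst hi
      exact (hdyn i t).continuousAt
  have hec : ∀ i : Fin N, Continuous (e i) := fun i =>
    (hxc i.castSucc).sub (hxc (p i))
  -- forcing terms
  set c : Fin N → ℝ → Fin n → ℝ := fun i t =>
    if h : p i = Fin.last N then 0
    else w ((p i).castPred h).castSucc (p ((p i).castPred h)) •
      (B * K ((p i).castPred h)).mulVec (e ((p i).castPred h) t) with hcdef
  -- key mulVec simplification
  have hBK : ∀ (i : Fin N) (u : Fin n → ℝ),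
      B.mulVec ((K i).mulVec (w i.castSucc (p i) • u))
        = w i.castSucc (p i) • (B * K i).mulVec u := by
    intro i u
    rw [Matrix.mulVec_smul, Matrix.mulVec_smul, Matrix.mulVec_mulVec]
  -- parent derivative, uniform form
  have hpar : ∀ (i : Fin N) (t : ℝ),
      HasDerivAt (x (p i)) (A.mulVec (x (p i) t) - c i t) t := by
    intro i t
    by_cases h : p i = Fin.last N
    · have := hroot t
      rw [hcdef]
      simp only [h, dif_pos]
      simpa using hroot t
    · set j := (p i).castPred h with hj
      have hjc : j.castSucc = p i := Fin.castSucc_castPred (p i) h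
      have hd := hdyn j t
      rw [hjc] at hd
      have hBK' : ∀ u : Fin n → ℝ, B.mulVec ((K j).mulVec (w (p i) (p j) • u))
          = w (p i) (p j) • (B * K j).mulVec u := by
        intro u
        rw [Matrix.mulVec_smul, Matrix.mulVec_smul, Matrix.mulVec_mulVec]
      have hne : x (p j) t - x (p i) t = -(e j t) := by
        simp only [hedef, hjc]
        rw [neg_sub]
      rw [hBK' (x (p j) t - x (p i) t), hne, Matrix.mulVec_neg, smul_neg] at hd
      have hce : c i t = w (p i) (p j) • (B * K j).mulVec (e j t) := by
        rw [hcdef]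
        simp only [dif_neg h]
        rw [← hj, hjc]
      rw [hce, sub_eq_add_neg]
      exact hd
  -- error dynamics
  have hde : ∀ (i : Fin N) (t : ℝ),
      HasDerivAt (e i)
        ((A - w i.castSucc (p i) • (B * K i)).mulVec (e i t) + c i t) t := by
    intro i t
    have h1 := (hdyn i t).sub (hpar i t)
    have heq : (A.mulVec (x i.castSucc t) +
          B.mulVec ((K i).mulVec (w i.castSucc (p i) • (x (p i) t - x i.castSucc t))))
        - (A.mulVec (x (p i) t) - c i t)
        = (A - w i.castSucc (p i) • (B * K i)).mulVec (e i t) + c i t := by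
      rw [hBK i (x (p i) t - x i.castSucc t)]
      rw [Matrix.sub_mulVec, Matrix.smul_mulVec]
      have h2 : x (p i) t - x i.castSucc t = -(e i t) := by
        rw [hedef]; simp
      rw [h2, Matrix.mulVec_neg]
      have h3 : A.mulVec (e i t) = A.mulVec (x i.castSucc t) - A.mulVec (x (p i) t) := by
        rw [hedef]
        simp only []
        rw [← Matrix.mulVec_sub]
      rw [h3]
      module
    rw [← heq]
    exact h1
  -- errors tend to zero (downward induction)
  have hE : ∀ (k : ℕ) (i : Fin N), N - i.val ≤ k → Tendsto (e i) atTop (nhds 0) := by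
    intro k
    induction k with
    | zero =>
      intro i hle
      exact absurd hle (by have := i.isLt; omega)
    | succ k IHk =>
      intro i hle
      apply decay_real (hHur i) (f := c i) ?_ ?_ (hde i)
      · by_cases h : p i = Fin.last N
        · rw [hcdef]; simp only [dif_pos h]; exact continuous_const
        · rw [hcdef]; simp only [dif_neg h]
          exact (mulVec_continuous' (B * K ((p i).castPred h)) (hec ((p i).castPred h))).const_smul
              (w ((p i).castPred h).castSucc (p ((p i).castPred h)))
      · by_cases h : p i = Fin.last N
        · rw [hcdef]; simp only [dif_pos h]; exact tendsto_const_nhds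
        · rw [hcdef]; simp only [dif_neg h]
          set j := (p i).castPred h with hj
          have hjval : (j : ℕ) = (p i : ℕ) := Fin.coe_castPred (p i) h
          have hpi : (i : ℕ) < (p i : ℕ) := by
            have := hp i
            rw [Fin.lt_def] at this
            simpa using this
          have hjk : N - (j : ℕ) ≤ k := by omega
          have := (mulVec_tendsto_zero (B * K j) (IHk j hjk)).const_smul
            (w j.castSucc (p j))
          simpa using this
  -- distance to the root
  have hchain : ∀ (k : ℕ) (v : Fin (N + 1)), N - (v : ℕ) ≤ k →
      Tendsto (fun t => x v t - x (Fin.last N) t) atTop (nhds 0) := by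
    intro k
    induction k with
    | zero =>
      intro v hle
      have hv : v = Fin.last N := by
        have := v.isLt
        apply Fin.ext
        simp only [Fin.val_last]
        omega
      subst hv
      have : (fun t => x (Fin.last N) t - x (Fin.last N) t) = fun _ => (0 : Fin n → ℝ) := by
        funext t
        simp
      rw [this]
      exact tendsto_const_nhds
    | succ k IHk =>
      intro v hle
      by_cases h : v = Fin.last N
      · subst h
        have : (fun t => x (Fin.last N) t - x (Fin.last N) t) = fun _ => (0 : Fin n → ℝ) := by
          funext t
          simp
        rw [this]
        exact tendsto_const_nhds
      · set i := v.castPred h with hi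
        have hic : i.castSucc = v := Fin.castSucc_castPred v h
        have hival : (i : ℕ) = (v : ℕ) := Fin.coe_castPred v h
        have hpi : (i : ℕ) < (p i : ℕ) := by
          have := hp i
          rw [Fin.lt_def] at this
          simpa using this
        have h1 : Tendsto (e i) atTop (nhds 0) := hE N i (Nat.sub_le _ _)
        have h2 : Tendsto (fun t => x (p i) t - x (Fin.last N) t) atTop (nhds 0) :=
          IHk (p i) (by omega)
        have h3 := h1.add h2
        have heq : (fun t => e i t + (x (p i) t - x (Fin.last N) t))
            = fun t => x v t - x (Fin.last N) t := by
          funext t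
          rw [hedef]
          simp only [hic]
          abel
        rw [heq] at h3
        simpa using h3
  intro i j
  have hi := hchain N i (Nat.sub_le _ _)
  have hj := hchain N j (Nat.sub_le _ _)
  have h3 := hi.sub hj
  have heq : (fun t => (x i t - x (Fin.last N) t) - (x j t - x (Fin.last N) t))
      = fun t => x i t - x j t := by
    funext t
    abel
  rw [heq] at h3
  simpa using h3
end

section
/- Block Gershgorin theorem: let M be a complex matrix partitioned into n×n blocks M_{ij}, i,j = 1,...,k, with each diagonal block M_{ii}. Then every eigenvalue λ of M satisfies, for at least one index i, either λ is an eigenvalue of M_{ii}, or ||(M_{ii} - λI)^{-1}||^{-1} ≤ Σ_{j≠i} ||M_{ij}||, where ||·|| is the operator norm induced by a fixed vector norm on C^n. -/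
/-- The operator norm on `n×n` complex matrices induced by the `ℓ∞` vector norm:
the maximal absolute row sum. -/
noncomputable def mnorm {n : ℕ} (A : Matrix (Fin n) (Fin n) ℂ) : ℝ :=
  ⨆ i : Fin n, ∑ j : Fin n, ‖A i j‖

/-- `‖A⁻¹‖⁻¹`, with the convention that it is `0` when `A` is singular
(Mathlib's matrix inverse is `0` on singular matrices, and `(0:ℝ)⁻¹ = 0`). -/
noncomputable def mlow {n : ℕ} (A : Matrix (Fin n) (Fin n) ℂ) : ℝ :=
  (mnorm A⁻¹)⁻¹

lemma mnorm_nonneg {n : ℕ} (A : Matrix (Fin n) (Fin n) ℂ) : 0 ≤ mnorm A :=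
  Real.iSup_nonneg fun _ => Finset.sum_nonneg fun _ _ => norm_nonneg _

/-- Row bound: `|(B x)_a| ≤ ‖B‖ c` when all `|x_b| ≤ c`. -/
lemma row_bound {n : ℕ} (B : Matrix (Fin n) (Fin n) ℂ) (x : Fin n → ℂ) (c : ℝ)
    (hc : 0 ≤ c) (hx : ∀ b, ‖x b‖ ≤ c) (a : Fin n) :
    ‖∑ b, B a b * x b‖ ≤ mnorm B * c := by
  calc ‖∑ b, B a b * x b‖
      ≤ ∑ b, ‖B a b * x b‖ := norm_sum_le _ _
    _ = ∑ b, ‖B a b‖ * ‖x b‖ := by simp [norm_mul]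
    _ ≤ ∑ b, ‖B a b‖ * c :=
        Finset.sum_le_sum fun b _ =>
          mul_le_mul_of_nonneg_left (hx b) (norm_nonneg _)
    _ = (∑ b, ‖B a b‖) * c := (Finset.sum_mul _ _ _).symm
    _ ≤ mnorm B * c := by
        refine mul_le_mul_of_nonneg_right ?_ hc
        exact le_ciSup (f := fun i : Fin n => ∑ j, ‖B i j‖)
          (Set.Finite.bddAbove (Set.finite_range _)) a

/-- **block Gershgorin theorem.** Let `M` be a complex matrix partitioned
into `n×n` blocks `M_{ij}`, `i, j : Fin k`.  Every eigenvalue `λ` of `M` satisfies, for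
at least one index `i`, either `λ` is an eigenvalue of the diagonal block `M_{ii}`, or
`‖(M_{ii} - λI)⁻¹‖⁻¹ ≤ Σ_{j ≠ i} ‖M_{ij}‖`. -/
theorem stmt9 {k n : ℕ} (M : Matrix (Fin k × Fin n) (Fin k × Fin n) ℂ)
    (lam : ℂ) (hlam : lam ∈ spectrum ℂ M) :
    ∃ i : Fin k,
      lam ∈ spectrum ℂ (fun a b : Fin n => M (i, a) (i, b)) ∨
      mlow ((Matrix.of fun a b : Fin n => M (i, a) (i, b)) - lam • (1 : Matrix (Fin n) (Fin n) ℂ))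
        ≤ ∑ j ∈ Finset.univ.erase i, mnorm (fun a b : Fin n => M (i, a) (j, b)) := by
  rw [spectrum.mem_iff, Algebra.algebraMap_eq_smul_one] at hlam
  have hdet : (lam • (1 : Matrix (Fin k × Fin n) (Fin k × Fin n) ℂ) - M).det = 0 := by
    by_contra h
    exact hlam ((Matrix.isUnit_iff_isUnit_det _).mpr (isUnit_iff_ne_zero.mpr h))
  obtain ⟨v, hv0, hv⟩ := Matrix.exists_mulVec_eq_zero_iff.mpr hdet
  have hMv : M.mulVec v = lam • v := by
    have := hv
    rw [Matrix.sub_mulVec, Matrix.smul_mulVec, Matrix.one_mulVec, sub_eq_zero] at this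
    exact this.symm
  obtain ⟨p0, hp0⟩ := Function.ne_iff.mp hv0
  haveI : Nonempty (Fin k × Fin n) := ⟨p0⟩
  obtain ⟨p, hp⟩ := Finite.exists_max (fun q => ‖v q‖)
  set i : Fin k := p.1 with hi
  have hcpos : 0 < ‖v p‖ :=
    lt_of_lt_of_le (norm_pos_iff.mpr hp0) (hp p0)
  set c : ℝ := ‖v p‖ with hcdef
  have hc0 : (0:ℝ) ≤ c := le_of_lt hcpos
  refine ⟨i, ?_⟩
  set A : Matrix (Fin n) (Fin n) ℂ :=
    (Matrix.of fun a b : Fin n => M (i, a) (i, b)) - lam • (1 : Matrix (Fin n) (Fin n) ℂ) with hAdef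
  by_cases hA : IsUnit A.det
  · right
    set S : ℝ := ∑ j ∈ Finset.univ.erase i, mnorm (fun a b : Fin n => M (i, a) (j, b)) with hSdef
    have hS0 : 0 ≤ S := Finset.sum_nonneg fun j _ => mnorm_nonneg _
    set vi : Fin n → ℂ := fun b => v (i, b) with hvidef
    -- the key identity: A.mulVec vi a = -(∑ j ≠ i, ∑ b, M (i,a) (j,b) * v (j,b))
    have key : ∀ a : Fin n,
        (A.mulVec vi) a = -(∑ j ∈ Finset.univ.erase i, ∑ b, M (i, a) (j, b) * v (j, b)) := by
      intro a
      have hrow : ∑ j : Fin k, ∑ b, M (i, a) (j, b) * v (j, b) = lam * v (i, a) := by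
        have := congrFun hMv (i, a)
        simpa [Matrix.mulVec, dotProduct, Fintype.sum_prod_type] using this
      have hsplit : (∑ j ∈ Finset.univ.erase i, ∑ b, M (i, a) (j, b) * v (j, b))
          + ∑ b, M (i, a) (i, b) * v (i, b)
          = ∑ j : Fin k, ∑ b, M (i, a) (j, b) * v (j, b) :=
        Finset.sum_erase_add _ _ (Finset.mem_univ i)
      have hAv : (A.mulVec vi) a = (∑ b, M (i, a) (i, b) * v (i, b)) - lam * v (i, a) := by
        rw [hAdef, Matrix.sub_mulVec, Matrix.smul_mulVec, Matrix.one_mulVec]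
        simp [Matrix.mulVec, dotProduct, hvidef, Matrix.of_apply, smul_eq_mul]
      rw [hAv]
      rw [hrow] at hsplit
      linear_combination hsplit
    -- bound on A.mulVec vi
    have hw : ∀ a : Fin n, ‖(A.mulVec vi) a‖ ≤ S * c := by
      intro a
      rw [key a, norm_neg]
      calc ‖∑ j ∈ Finset.univ.erase i, ∑ b, M (i, a) (j, b) * v (j, b)‖
          ≤ ∑ j ∈ Finset.univ.erase i, ‖∑ b, M (i, a) (j, b) * v (j, b)‖ :=
            norm_sum_le _ _
        _ ≤ ∑ j ∈ Finset.univ.erase i, mnorm (fun a b : Fin n => M (i, a) (j, b)) * c := by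
            refine Finset.sum_le_sum fun j _ => ?_
            exact row_bound (Matrix.of fun a b : Fin n => M (i, a) (j, b))
              (fun b => v (j, b)) c hc0 (fun b => hp (j, b)) a
        _ = S * c := by rw [hSdef, Finset.sum_mul]
    -- recover vi from A⁻¹
    have hvi : vi = A⁻¹.mulVec (A.mulVec vi) := by
      rw [Matrix.mulVec_mulVec, Matrix.nonsing_inv_mul A hA, Matrix.one_mulVec]
    have hbound : c ≤ mnorm A⁻¹ * (S * c) := by
      have h1 : ‖vi p.2‖ ≤ mnorm A⁻¹ * (S * c) := by
        rw [hvi]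
        exact row_bound A⁻¹ (A.mulVec vi) (S * c)
          (mul_nonneg hS0 hc0) hw p.2
      have h2 : vi p.2 = v p := by rw [hvidef]
      rw [h2] at h1
      exact h1
    have hone : 1 ≤ mnorm A⁻¹ * S := by
      nlinarith [hbound, hcpos]
    have hApos : (0:ℝ) < mnorm A⁻¹ := by
      by_contra h
      push_neg at h
      nlinarith [hone, hS0, mnorm_nonneg A⁻¹]
    rw [mlow]
    calc (mnorm A⁻¹)⁻¹ = (mnorm A⁻¹)⁻¹ * 1 := (mul_one _).symm
      _ ≤ (mnorm A⁻¹)⁻¹ * (mnorm A⁻¹ * S) :=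
          mul_le_mul_of_nonneg_left hone (inv_nonneg.mpr (le_of_lt hApos))
      _ = S := by rw [← mul_assoc, inv_mul_cancel₀ (ne_of_gt hApos), one_mul]
  · right
    have hinv : A⁻¹ = 0 := Matrix.nonsing_inv_apply_not_isUnit A hA
    have : mlow A = 0 := by
      rw [mlow, hinv]
      have : mnorm (0 : Matrix (Fin n) (Fin n) ℂ) = 0 := by
        haveI : Nonempty (Fin n) := ⟨p.2⟩
        simp [mnorm]
      rw [this, inv_zero]
    rw [this]
    exact Finset.sum_nonneg fun j _ => mnorm_nonneg _
end

section
/- If every block Gershgorin region of a block-partitioned matrix M lies in the open left half-plane, i.e., for each i the set {λ ∈ C : ||(M_{ii} - λI)^{-1}||^{-1} ≤ Σ_{j≠i}||M_{ij}||} ∪ spectrum(M_{ii}) is contained in {λ : Re λ < 0}, then M is Hurwitz. -/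
lemma rowsum_le_mnorm {n : ℕ} (A : Matrix (Fin n) (Fin n) ℂ) (a : Fin n) :
    ∑ j, ‖A a j‖ ≤ mnorm A :=
  le_ciSup (f := fun i : Fin n => ∑ j, ‖A i j‖)
    (Set.Finite.bddAbove (Set.finite_range _)) a

lemma abs_mulVec_le {n : ℕ} (A : Matrix (Fin n) (Fin n) ℂ) (x : Fin n → ℂ) (c : ℝ)
    (hc : 0 ≤ c) (hx : ∀ j, ‖x j‖ ≤ c) (a : Fin n) :
    ‖(A.mulVec x) a‖ ≤ mnorm A * c := by
  have : (A.mulVec x) a = ∑ j, A a j * x j := by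
    simp [Matrix.mulVec, dotProduct]
  rw [this]
  calc ‖∑ j, A a j * x j‖ ≤ ∑ j, ‖A a j * x j‖ :=
        norm_sum_le _ _
    _ ≤ ∑ j, ‖A a j‖ * c := by
        refine Finset.sum_le_sum fun j _ => ?_
        rw [norm_mul]
        exact mul_le_mul_of_nonneg_left (hx j) (norm_nonneg _)
    _ = (∑ j, ‖A a j‖) * c := by rw [Finset.sum_mul]
    _ ≤ mnorm A * c := mul_le_mul_of_nonneg_right (rowsum_le_mnorm A a) hc

/-- If every block Gershgorin region of a block-partitioned complex
matrix `M` lies in the open left half-plane, i.e. for each block row `i` the set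
`{λ : ‖(M_{ii} - λI)⁻¹‖⁻¹ ≤ Σ_{j ≠ i} ‖M_{ij}‖} ∪ spectrum(M_{ii})` is contained in
`{λ : Re λ < 0}`, then `M` is Hurwitz (all its eigenvalues have negative real part). -/
theorem stmt10 {k n : ℕ} (M : Matrix (Fin k × Fin n) (Fin k × Fin n) ℂ)
    (h : ∀ (i : Fin k) (lam : ℂ),
      (lam ∈ spectrum ℂ (fun a b : Fin n => M (i, a) (i, b)) ∨
        mlow ((Matrix.of fun a b : Fin n => M (i, a) (i, b))
            - lam • (1 : Matrix (Fin n) (Fin n) ℂ))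
          ≤ ∑ j ∈ Finset.univ.erase i, mnorm (fun a b : Fin n => M (i, a) (j, b))) →
      lam.re < 0) :
    ∀ μ ∈ spectrum ℂ M, μ.re < 0 := by
  intro μ hμ
  rw [spectrum.mem_iff] at hμ
  have hdet : (algebraMap ℂ (Matrix (Fin k × Fin n) (Fin k × Fin n) ℂ) μ - M).det = 0 := by
    by_contra hd
    exact hμ ((Matrix.isUnit_iff_isUnit_det _).2 (isUnit_iff_ne_zero.2 hd))
  obtain ⟨v, hv0, hv⟩ := Matrix.exists_mulVec_eq_zero_iff.2 hdet
  have hMv : M.mulVec v = μ • v := by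
    have h1 : (algebraMap ℂ (Matrix (Fin k × Fin n) (Fin k × Fin n) ℂ) μ - M).mulVec v
        = μ • v - M.mulVec v := by
      rw [Matrix.sub_mulVec, Algebra.algebraMap_eq_smul_one,
        Matrix.smul_mulVec, Matrix.one_mulVec]
    rw [h1] at hv
    linear_combination (norm := module) -hv
  -- argmax coordinate
  obtain ⟨p₀, -, hmax⟩ := Finset.exists_max_image Finset.univ
    (fun p => ‖v p‖) (by
      obtain ⟨q, hq⟩ := Function.ne_iff.1 hv0
      exact ⟨q, Finset.mem_univ q⟩)
  obtain ⟨i, a₀⟩ := p₀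
  set c : ℝ := ‖v (i, a₀)‖ with hc
  have hmax' : ∀ q, ‖v q‖ ≤ c := fun q => hmax q (Finset.mem_univ q)
  have hcpos : 0 < c := by
    obtain ⟨q, hq⟩ := Function.ne_iff.1 hv0
    have := hmax' q
    have : (0:ℝ) < ‖v q‖ := norm_pos_iff.2 hq
    linarith [hmax' q]
  set B : Matrix (Fin n) (Fin n) ℂ := Matrix.of fun a b : Fin n => M (i, a) (i, b) with hB
  set B' : Matrix (Fin n) (Fin n) ℂ := B - μ • (1 : Matrix (Fin n) (Fin n) ℂ) with hB'
  set w : Fin n → ℂ := fun a => v (i, a) with hw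
  set S : ℝ := ∑ j ∈ Finset.univ.erase i, mnorm (fun a b : Fin n => M (i, a) (j, b)) with hS
  have hS0 : 0 ≤ S := Finset.sum_nonneg fun j _ => mnorm_nonneg _
  -- key equation
  have hkey : ∀ a' : Fin n, (B'.mulVec w) a'
      = -∑ j ∈ Finset.univ.erase i, ∑ b, M (i, a') (j, b) * v (j, b) := by
    intro a'
    have heig : ∑ q, M (i, a') q * v q = μ * v (i, a') := by
      have := congrFun hMv (i, a')
      simpa [Matrix.mulVec, dotProduct] using this
    rw [Fintype.sum_prod_type] at heig
    rw [← Finset.add_sum_erase Finset.univ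
      (fun j => ∑ b, M (i, a') (j, b) * v (j, b)) (Finset.mem_univ i)] at heig
    have hBw : (B'.mulVec w) a' = (∑ b, M (i, a') (i, b) * v (i, b)) - μ * v (i, a') := by
      simp [hB', hB, Matrix.mulVec, dotProduct, hw, Matrix.sub_apply,
        Matrix.smul_apply, Matrix.one_apply, sub_mul, Finset.sum_sub_distrib,
        mul_ite, ite_mul, mul_zero, zero_mul, Finset.sum_ite_eq, smul_eq_mul, mul_assoc]
    rw [hBw]
    linear_combination heig
  have hbound : ∀ a' : Fin n, ‖(B'.mulVec w) a'‖ ≤ S * c := by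
    intro a'
    rw [hkey a', norm_neg]
    calc ‖∑ j ∈ Finset.univ.erase i, ∑ b, M (i, a') (j, b) * v (j, b)‖
        ≤ ∑ j ∈ Finset.univ.erase i, ‖∑ b, M (i, a') (j, b) * v (j, b)‖ :=
          norm_sum_le _ _
      _ ≤ ∑ j ∈ Finset.univ.erase i, mnorm (fun a b : Fin n => M (i, a) (j, b)) * c := by
          refine Finset.sum_le_sum fun j _ => ?_
          exact abs_mulVec_le (Matrix.of fun a b : Fin n => M (i, a) (j, b))
            (fun b => v (j, b)) c hcpos.le (fun b => hmax' (j, b)) a'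
      _ = S * c := by rw [hS, Finset.sum_mul]
  refine h i μ (Or.inr ?_)
  have hmlow : mlow B' = (mnorm B'⁻¹)⁻¹ := rfl
  show mlow B' ≤ S
  by_cases hu : IsUnit B'.det
  · have hCB : B'⁻¹ * B' = 1 := Matrix.nonsing_inv_mul B' hu
    have hwrec : w = B'⁻¹.mulVec (B'.mulVec w) := by
      rw [Matrix.mulVec_mulVec, hCB, Matrix.one_mulVec]
    have hcle : c ≤ mnorm B'⁻¹ * (S * c) := by
      have h2 := abs_mulVec_le B'⁻¹ (B'.mulVec w) (S * c)
        (mul_nonneg hS0 hcpos.le) hbound a₀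
      calc c = ‖(B'⁻¹.mulVec (B'.mulVec w)) a₀‖ := by rw [← hwrec]
        _ ≤ mnorm B'⁻¹ * (S * c) := h2
    have hN0 : 0 ≤ mnorm B'⁻¹ := mnorm_nonneg _
    rcases eq_or_lt_of_le hN0 with hz | hpos
    · rw [hmlow, ← hz, inv_zero]; exact hS0
    · rw [hmlow, inv_le_iff_one_le_mul₀ hpos]
      nlinarith
  · have hinv : B'⁻¹ = 0 := Matrix.nonsing_inv_apply_not_isUnit B' hu
    have : Nonempty (Fin n) := ⟨a₀⟩
    have hm0 : mnorm B'⁻¹ = 0 := by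
      rw [hinv]
      show (⨆ i : Fin n, ∑ j : Fin n, ‖(0 : Matrix (Fin n) (Fin n) ℂ) i j‖) = 0
      simp
    rw [hmlow, hm0, inv_zero]
    exact hS0
end

section
/- The multi-agent system ẋ_i = A x_i + B u_i with distributed protocol u_i = K_i Σ_{j∈N_i} w_{ij}(x_j - x_i) achieves asymptotic state consensus if and only if the corresponding closed-loop fundamental edge state system ẏ = [I_{N-1} ⊗ A + Σ_{i=1}^N (p_i w_i Γ_i) ⊗ (B K_i)] y is asymptotically stable, where y is the vector of fundamental edge states with respect to a directed spanning tree of the communication graph. -/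
open Kronecker Filter

noncomputable def cvec {N : ℕ} (p : Fin N → Fin (N + 1))
    (hp : ∀ k : Fin N, k.castSucc < p k) (i : Fin (N + 1)) : Fin N → ℝ :=
  if h : (i : ℕ) < N then
    cvec p hp (p ⟨i, h⟩) + Pi.single ⟨i, h⟩ (-1)
  else 0
termination_by N - (i : ℕ)
decreasing_by
  have h2 := hp ⟨i, h⟩
  simp only [Fin.lt_def, Fin.coe_castSucc] at h2
  omega

theorem cvec_last {N : ℕ} (p : Fin N → Fin (N + 1)) (hp : ∀ k : Fin N, k.castSucc < p k) :
    cvec p hp (Fin.last N) = 0 := by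
  rw [cvec]; simp

theorem cvec_castSucc {N : ℕ} (p : Fin N → Fin (N + 1)) (hp : ∀ k : Fin N, k.castSucc < p k)
    (k : Fin N) :
    cvec p hp k.castSucc = cvec p hp (p k) + Pi.single k (-1) := by
  rw [cvec]
  have h : ((k.castSucc : Fin (N+1)) : ℕ) < N := k.isLt
  rw [dif_pos h]
  have : (⟨(↑k.castSucc : ℕ), h⟩ : Fin N) = k := Fin.ext rfl
  rw [this]

theorem cvec_sum {N : ℕ} (p : Fin N → Fin (N + 1)) (hp : ∀ k : Fin N, k.castSucc < p k)
    (φ : Fin (N + 1) → ℝ) (i : Fin (N + 1)) :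
    φ i - φ (Fin.last N) = ∑ k, cvec p hp i k * (φ (p k) - φ k.castSucc) := by
  by_cases h : (i : ℕ) < N
  · have key := cvec_sum p hp φ (p ⟨i, h⟩)
    have hi : i = (⟨i, h⟩ : Fin N).castSucc := Fin.ext rfl
    rw [hi, cvec_castSucc]
    simp only [Pi.add_apply]
    rw [Finset.sum_congr rfl (fun k _ => add_mul _ _ _), Finset.sum_add_distrib, ← key]
    have : ∑ k, (Pi.single (⟨i, h⟩ : Fin N) (-1 : ℝ) : Fin N → ℝ) k * (φ (p k) - φ k.castSucc)
        = -(φ (p ⟨i, h⟩) - φ (⟨i, h⟩ : Fin N).castSucc) := by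
      rw [Finset.sum_eq_single (⟨i, h⟩ : Fin N)]
      · simp
      · intro b _ hb; rw [Pi.single_eq_of_ne hb]; ring
      · simp
    rw [this]; ring
  · have hi : i = Fin.last N := by
      apply Fin.ext; have := i.isLt; simp only [Fin.val_last]; omega
    rw [hi, cvec_last]; simp
termination_by N - (i : ℕ)
decreasing_by
  have h2 := hp ⟨i, h⟩
  simp only [Fin.lt_def, Fin.coe_castSucc] at h2
  omega

theorem cvec_pvec {N : ℕ} (p : Fin N → Fin (N + 1)) (hp : ∀ k : Fin N, k.castSucc < p k)
    (i i' : Fin (N + 1)) :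
    ∑ k, cvec p hp i k *
        (if i' = k.castSucc then (-1 : ℝ) else if i' = p k then 1 else 0)
      = (if i' = i then 1 else 0) - (if i' = Fin.last N then 1 else 0) := by
  have key := cvec_sum p hp (fun j => if i' = j then (1 : ℝ) else 0) i
  rw [key]
  apply Finset.sum_congr rfl
  intro k _
  congr 1
  have hne : p k ≠ k.castSucc := (hp k).ne'
  by_cases h1 : i' = k.castSucc <;> by_cases h2 : i' = p k <;>
    simp_all <;> ring_nf <;> simp_all

theorem exists_linear_ode_sol {n : ℕ} (A : Matrix (Fin n) (Fin n) ℝ)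
    (f : ℝ → Fin n → ℝ) (hf : Continuous f) :
    ∃ z : ℝ → Fin n → ℝ, ∀ t, HasDerivAt z (A.mulVec (z t) + f t) t := by
  let L : (Fin n → ℝ) →L[ℝ] (Fin n → ℝ) := (Matrix.mulVecLin A).toContinuousLinearMap
  let E : ℝ → ((Fin n → ℝ) →L[ℝ] (Fin n → ℝ)) := fun t => NormedSpace.exp (t • L)
  have hEder : ∀ t : ℝ, HasDerivAt E (L * E t) t := fun t =>
    hasDerivAt_exp_smul_const' L t
  have hEcont : Continuous E := by
    have h1 : Continuous fun t : ℝ => t • L := by continuity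
    exact continuous_iff_continuousAt.2 fun t => (hEder t).continuousAt
  have hEinv : ∀ t : ℝ, E t * E (-t) = 1 := by
    intro t
    have hc : Commute (t • L) ((-t) • L) := (Commute.refl L).smul_left t |>.smul_right (-t)
    rw [show (1 : (Fin n → ℝ) →L[ℝ] (Fin n → ℝ))
        = NormedSpace.exp (0 : (Fin n → ℝ) →L[ℝ] (Fin n → ℝ)) by rw [NormedSpace.exp_zero]]
    show NormedSpace.exp (t • L) * NormedSpace.exp ((-t) • L) = _
    rw [← NormedSpace.exp_add_of_commute_of_mem_ball (𝕂 := ℝ) hc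
      ((NormedSpace.expSeries_radius_eq_top ℝ ((Fin n → ℝ) →L[ℝ] (Fin n → ℝ))).symm ▸ edist_lt_top _ _)
      ((NormedSpace.expSeries_radius_eq_top ℝ ((Fin n → ℝ) →L[ℝ] (Fin n → ℝ))).symm ▸ edist_lt_top _ _)]
    congr 1
    module
  have hgcont : Continuous fun s => (E (-s)) (f s) :=
    (hEcont.comp continuous_neg).clm_apply hf
  let G : ℝ → (Fin n → ℝ) := fun t => ∫ s in (0:ℝ)..t, (E (-s)) (f s)
  have hGder : ∀ t : ℝ, HasDerivAt G ((E (-t)) (f t)) t := by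
    intro t
    exact intervalIntegral.integral_hasDerivAt_right
      (hgcont.intervalIntegrable _ _)
      (hgcont.stronglyMeasurableAtFilter _ _)
      hgcont.continuousAt
  refine ⟨fun t => (E t) (G t), fun t => ?_⟩
  have h1 : HasDerivAt (fun t => (E t) (G t)) ((L * E t) (G t) + (E t) ((E (-t)) (f t))) t :=
    (hEder t).clm_apply (hGder t)
  convert h1 using 1
  have h2 : (E t) ((E (-t)) (f t)) = f t := by
    rw [← ContinuousLinearMap.comp_apply, ← ContinuousLinearMap.mul_def, hEinv]
    rfl
  rw [h2]
  congr 1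

theorem hM_formula {N n m : ℕ}
    (A : Matrix (Fin n) (Fin n) ℝ) (B : Matrix (Fin n) (Fin m) ℝ)
    (w : Fin (N + 1) → Fin (N + 1) → ℝ)
    (Γ : Fin (N + 1) → Fin (N + 1) → Fin N → ℝ)
    (K : Fin (N + 1) → Matrix (Fin m) (Fin n) ℝ)
    (pvec : Fin (N + 1) → Fin N → ℝ)
    (Y : Fin N × Fin n → ℝ) (k' : Fin N) (s : Fin n) :
    (((1 : Matrix (Fin N) (Fin N) ℝ) ⊗ₖ A
        + ∑ i : Fin (N + 1),
            (Matrix.vecMulVec (pvec i) (fun k => ∑ j, w i j * Γ i j k)) ⊗ₖ (B * K i)).mulVec Y)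
        (k', s)
      = (∑ r, A s r * Y (k', r))
        + ∑ i, pvec i k' * ∑ r, (B * K i) s r * ∑ j, w i j * ∑ k, Γ i j k * Y (k, r) := by
  simp only [Matrix.mulVec, dotProduct, Matrix.add_apply, Matrix.sum_apply,
    Matrix.kroneckerMap_apply, Matrix.one_apply, Matrix.vecMulVec_apply,
    Fintype.sum_prod_type, add_mul, Finset.sum_add_distrib, Finset.sum_mul, Finset.mul_sum]
  congr 1
  · rw [Finset.sum_comm]
    rw [Finset.sum_congr rfl (fun r _ => Finset.sum_eq_single k'
      (fun b _ hb => by simp [hb.symm]) (by simp))]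
    simp
  · rw [Finset.sum_comm]
    calc ∑ y : Fin n, ∑ x : Fin N, ∑ i : Fin (N+1), ∑ j : Fin (N+1),
          pvec i k' * (w i j * Γ i j x) * (B * K i) s y * Y (x, y)
        = ∑ y : Fin n, ∑ i : Fin (N+1), ∑ x : Fin N, ∑ j : Fin (N+1),
          pvec i k' * (w i j * Γ i j x) * (B * K i) s y * Y (x, y) :=
          Finset.sum_congr rfl (fun y _ => Finset.sum_comm)
      _ = ∑ i : Fin (N+1), ∑ y : Fin n, ∑ x : Fin N, ∑ j : Fin (N+1),
          pvec i k' * (w i j * Γ i j x) * (B * K i) s y * Y (x, y) := Finset.sum_comm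
      _ = ∑ i : Fin (N+1), ∑ y : Fin n, ∑ j : Fin (N+1), ∑ x : Fin N,
          pvec i k' * (w i j * Γ i j x) * (B * K i) s y * Y (x, y) :=
          Finset.sum_congr rfl (fun i _ => Finset.sum_congr rfl (fun y _ => Finset.sum_comm))
      _ = ∑ i : Fin (N+1), ∑ y : Fin n, ∑ j : Fin (N+1), ∑ x : Fin N,
          pvec i k' * ((B * K i) s y * (w i j * (Γ i j x * Y (x, y)))) :=
          Finset.sum_congr rfl (fun i _ => Finset.sum_congr rfl (fun y _ =>
            Finset.sum_congr rfl (fun j _ => Finset.sum_congr rfl (fun x _ => by ring))))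

/-- The multi-agent system `ẋ_i = A x_i + B u_i` with distributed
protocol `u_i = K_i Σ_{j} w_{ij}(x_j - x_i)` achieves asymptotic state consensus if and
only if the closed-loop fundamental edge state system
`ẏ = [I_{N-1} ⊗ A + Σ_i (p_i w_i Γ_i) ⊗ (B K_i)] y` is asymptotically stable.  Here the
communication graph on `Fin (N+1)` has nonnegative weights `w` and admits a directed
spanning tree rooted at the last vertex with parent map `p` (edge weights positive,
`p k > k`), `pvec i` is the `i`-th row of the tree incidence matrix, and `Γ i` is the
information flow matrix of agent `i`: its `j`-th row (with entries in `{-1,0,1}`)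
expresses `x_j - x_i` in the fundamental edge states when `j` is a neighbor of `i` and
vanishes otherwise. -/
theorem stmt12 {N n m : ℕ}
    (A : Matrix (Fin n) (Fin n) ℝ) (B : Matrix (Fin n) (Fin m) ℝ)
    (w : Fin (N + 1) → Fin (N + 1) → ℝ) (hw : ∀ i j, 0 ≤ w i j)
    (p : Fin N → Fin (N + 1)) (hp : ∀ k : Fin N, k.castSucc < p k)
    (hwt : ∀ k : Fin N, 0 < w k.castSucc (p k))
    (Γ : Fin (N + 1) → Fin (N + 1) → Fin N → ℝ)
    (hΓval : ∀ i j k, Γ i j k = -1 ∨ Γ i j k = 0 ∨ Γ i j k = 1)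
    (hΓ : ∀ i j, 0 < w i j → ∀ x : Fin (N + 1) → ℝ,
      x j - x i = ∑ k, Γ i j k * (x (p k) - x k.castSucc))
    (hΓ0 : ∀ i j, w i j = 0 → Γ i j = 0)
    (K : Fin (N + 1) → Matrix (Fin m) (Fin n) ℝ) :
    -- the `i`-th row of the incidence matrix of the spanning tree
    let pvec : Fin (N + 1) → Fin N → ℝ := fun i k =>
      if i = k.castSucc then -1 else if i = p k then 1 else 0
    -- closed-loop fundamental edge state system matrix
    let M : Matrix (Fin N × Fin n) (Fin N × Fin n) ℝ :=
      (1 : Matrix (Fin N) (Fin N) ℝ) ⊗ₖ A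
        + ∑ i : Fin (N + 1),
            (Matrix.vecMulVec (pvec i) (fun k => ∑ j, w i j * Γ i j k)) ⊗ₖ (B * K i)
    -- consensus of all closed-loop trajectories ↔ asymptotic stability of edge system
    ((∀ x : Fin (N + 1) → ℝ → (Fin n → ℝ),
        (∀ (i : Fin (N + 1)) (t : ℝ),
          HasDerivAt (x i)
            (A.mulVec (x i t) +
              B.mulVec ((K i).mulVec (∑ j, w i j • (x j t - x i t)))) t) →
        ∀ i j : Fin (N + 1), Tendsto (fun t => x i t - x j t) atTop (nhds 0))
      ↔
      (∀ y : ℝ → (Fin N × Fin n → ℝ),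
        (∀ t, HasDerivAt y (M.mulVec (y t)) t) → Tendsto y atTop (nhds 0))) := by
  intro pvec M
  -- formula for `M.mulVec`
  have hM : ∀ (Y : Fin N × Fin n → ℝ) (k' : Fin N) (s : Fin n),
      M.mulVec Y (k', s)
        = (∑ r, A s r * Y (k', r))
          + ∑ i, pvec i k' * ∑ r, (B * K i) s r * ∑ j, w i j * ∑ k, Γ i j k * Y (k, r) :=
    fun Y k' s => hM_formula A B w Γ K pvec Y k' s
  -- scalarized protocol identity
  have hu : ∀ (i : Fin (N + 1)) (v : Fin (N + 1) → ℝ),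
      ∑ j, w i j * (v j - v i) = ∑ j, w i j * ∑ k, Γ i j k * (v (p k) - v k.castSucc) := by
    intro i v
    apply Finset.sum_congr rfl
    intro j _
    rcases (hw i j).eq_or_lt with h | h
    · rw [← h]; ring
    · rw [hΓ i j h v]
  -- summing against a row of the incidence matrix
  have hpv : ∀ (k' : Fin N) (v : Fin (N + 1) → ℝ),
      ∑ i, pvec i k' * v i = v (p k') - v k'.castSucc := by
    intro k' v
    have hne : p k' ≠ k'.castSucc := (hp k').ne'
    have hterm : ∀ i : Fin (N + 1), pvec i k' * v i
        = (if i = p k' then v i else 0) - (if i = k'.castSucc then v i else 0) := by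
      intro i
      show (if i = k'.castSucc then (-1:ℝ) else if i = p k' then 1 else 0) * v i = _
      by_cases h1 : i = k'.castSucc
      · have h2 : i ≠ p k' := fun h => hne (h ▸ h1)
        rw [if_pos h1, if_neg h2, if_pos h1]; ring
      · rw [if_neg h1, if_neg h1]
        by_cases h2 : i = p k'
        · rw [if_pos h2, if_pos h2]; ring
        · rw [if_neg h2, if_neg h2]; ring
    rw [Finset.sum_congr rfl (fun i _ => hterm i), Finset.sum_sub_distrib,
      Finset.sum_ite_eq', Finset.sum_ite_eq']
    simp
  constructor
  · -- consensus → stability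
    intro hcons y hy
    have hycont : Continuous y := by
      rw [continuous_iff_continuousAt]; exact fun t => (hy t).continuousAt
    -- forcing term
    set f : ℝ → Fin n → ℝ := fun t s =>
      ∑ r, (B * K (Fin.last N)) s r * ∑ j, w (Fin.last N) j *
        ∑ k, Γ (Fin.last N) j k * y t (k, r) with hf_def
    have hfcont : Continuous f := by
      apply continuous_pi
      intro s
      apply continuous_finset_sum
      intro r _
      apply Continuous.mul continuous_const
      apply continuous_finset_sum
      intro j _
      apply Continuous.mul continuous_const
      apply continuous_finset_sum
      intro k _
      exact continuous_const.mul ((continuous_apply (k, r)).comp hycont)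
    obtain ⟨z, hz⟩ := exists_linear_ode_sol A f hfcont
    -- candidate trajectories
    set x : Fin (N + 1) → ℝ → (Fin n → ℝ) :=
      fun i t s => z t s + ∑ k, cvec p hp i k * y t (k, s) with hx_def
    -- edge states of `x` recover `y`
    have hedge : ∀ (k : Fin N) (t : ℝ) (r : Fin n),
        x (p k) t r - x k.castSucc t r = y t (k, r) := by
      intro k t r
      show (z t r + ∑ k', cvec p hp (p k) k' * y t (k', r))
          - (z t r + ∑ k', cvec p hp k.castSucc k' * y t (k', r)) = y t (k, r)
      rw [cvec_castSucc p hp k]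
      simp only [Pi.add_apply]
      rw [Finset.sum_congr rfl
        (fun k' _ => add_mul (cvec p hp (p k) k') ((Pi.single k (-1:ℝ) : Fin N → ℝ) k') _),
        Finset.sum_add_distrib]
      have hsingle : ∑ k', (Pi.single k (-1:ℝ) : Fin N → ℝ) k' * y t (k', r) = -y t (k, r) := by
        rw [Finset.sum_eq_single k]
        · simp
        · intro b _ hb; rw [Pi.single_eq_of_ne hb]; ring
        · simp
      rw [hsingle]; ring
    -- `x` solves the closed-loop multi-agent system
    have hxode : ∀ (i : Fin (N + 1)) (t : ℝ),
        HasDerivAt (x i)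
          (A.mulVec (x i t) +
            B.mulVec ((K i).mulVec (∑ j, w i j • (x j t - x i t)))) t := by
      intro i t
      apply hasDerivAt_pi.2
      intro s
      have hz_s : HasDerivAt (fun t => z t s) ((A.mulVec (z t) + f t) s) t :=
        hasDerivAt_pi.1 (hz t) s
      have hsum : HasDerivAt (fun t => ∑ k, cvec p hp i k * y t (k, s))
          (∑ k, cvec p hp i k * (M.mulVec (y t)) (k, s)) t :=
        HasDerivAt.fun_sum (fun k _ =>
          (hasDerivAt_pi.1 (hy t) (k, s)).const_mul (cvec p hp i k))
      have heq : (A.mulVec (x i t) +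
            B.mulVec ((K i).mulVec (∑ j, w i j • (x j t - x i t)))) s
          = (A.mulVec (z t) + f t) s + ∑ k, cvec p hp i k * (M.mulVec (y t)) (k, s) := by
        -- the `T` terms
        have hsum1 : ∑ k, cvec p hp i k * (M.mulVec (y t)) (k, s)
            = (∑ r, A s r * ∑ k, cvec p hp i k * y t (k, r))
              + ((∑ r, (B * K i) s r * ∑ j, w i j * ∑ k, Γ i j k * y t (k, r))
                - (∑ r, (B * K (Fin.last N)) s r * ∑ j, w (Fin.last N) j *
                    ∑ k, Γ (Fin.last N) j k * y t (k, r))) := by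
          rw [Finset.sum_congr rfl
            (fun k _ => congrArg (fun q => cvec p hp i k * q) (hM (y t) k s))]
          rw [Finset.sum_congr rfl (fun k _ => mul_add (cvec p hp i k) _ _),
            Finset.sum_add_distrib]
          congr 1
          · -- A-part
            rw [Finset.sum_congr rfl (fun k _ => Finset.mul_sum _ _ _), Finset.sum_comm]
            apply Finset.sum_congr rfl
            intro r _
            rw [Finset.mul_sum]
            apply Finset.sum_congr rfl
            intro k _
            ring
          · -- incidence part
            rw [Finset.sum_congr rfl (fun k _ => Finset.mul_sum _ _ _), Finset.sum_comm]
            have hstep : ∀ i' : Fin (N + 1),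
                ∑ k, cvec p hp i k * (pvec i' k *
                  ∑ r, (B * K i') s r * ∑ j, w i' j * ∑ k', Γ i' j k' * y t (k', r))
                = ((if i' = i then (1:ℝ) else 0) - (if i' = Fin.last N then 1 else 0)) *
                  ∑ r, (B * K i') s r * ∑ j, w i' j * ∑ k', Γ i' j k' * y t (k', r) := by
              intro i'
              rw [← cvec_pvec p hp i i', Finset.sum_mul]
              apply Finset.sum_congr rfl
              intro k _
              show cvec p hp i k * ((if i' = k.castSucc then (-1:ℝ)
                  else if i' = p k then 1 else 0) * _) = _
              ring
            rw [Finset.sum_congr rfl (fun i' _ => hstep i')]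
            simp only [sub_mul, one_mul, zero_mul, Finset.sum_sub_distrib, ite_mul]
            rw [Finset.sum_ite_eq', Finset.sum_ite_eq']
            simp [sub_eq_add_neg]
        rw [hsum1]
        have hAx : (A.mulVec (x i t)) s
            = (A.mulVec (z t)) s + ∑ r, A s r * ∑ k, cvec p hp i k * y t (k, r) := by
          show ∑ r, A s r * (z t r + ∑ k, cvec p hp i k * y t (k, r)) = _
          rw [Finset.sum_congr rfl (fun r _ => mul_add (A s r) _ _), Finset.sum_add_distrib]
          rfl
        have hBu : (B.mulVec ((K i).mulVec (∑ j, w i j • (x j t - x i t)))) s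
            = ∑ r, (B * K i) s r * ∑ j, w i j * ∑ k, Γ i j k * y t (k, r) := by
          rw [Matrix.mulVec_mulVec]
          show ∑ r, (B * K i) s r * (∑ j, w i j • (x j t - x i t)) r = _
          apply Finset.sum_congr rfl
          intro r _
          congr 1
          have hur : (∑ j, w i j • (x j t - x i t)) r
              = ∑ j, w i j * (x j t r - x i t r) := by
            simp [Finset.sum_apply]
          rw [hur, hu i (fun l => x l t r)]
          apply Finset.sum_congr rfl
          intro j _
          congr 1
          apply Finset.sum_congr rfl
          intro k _
          congr 1
          exact hedge k t r
        simp only [Pi.add_apply] at *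
        rw [hAx, hBu]
        have hfts : f t s = ∑ r, (B * K (Fin.last N)) s r * ∑ j, w (Fin.last N) j *
            ∑ k, Γ (Fin.last N) j k * y t (k, r) := rfl
        rw [hfts]
        ring
      rw [heq]
      exact hz_s.add hsum
    -- conclude stability from consensus
    have hcx := hcons x hxode
    rw [tendsto_pi_nhds]
    rintro ⟨k, s⟩
    have h := (tendsto_pi_nhds.1 (hcx (p k) k.castSucc)) s
    simp only [Pi.sub_apply, Pi.zero_apply] at h
    have h2 := h.congr (fun t => hedge k t s)
    simpa using h2
  · -- stability → consensus
    intro hstab x hx i j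
    set Y : ℝ → (Fin N × Fin n → ℝ) :=
      fun t kr => x (p kr.1) t kr.2 - x kr.1.castSucc t kr.2 with hY_def
    have hY : ∀ t, HasDerivAt Y (M.mulVec (Y t)) t := by
      intro t
      apply hasDerivAt_pi.2
      rintro ⟨k', s⟩
      have h1 := hasDerivAt_pi.1 (hx (p k') t) s
      have h2 := hasDerivAt_pi.1 (hx k'.castSucc t) s
      have h3 := h1.sub h2
      have heq : M.mulVec (Y t) (k', s)
          = (A.mulVec (x (p k') t) +
              B.mulVec ((K (p k')).mulVec (∑ j, w (p k') j • (x j t - x (p k') t)))) s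
            - (A.mulVec (x k'.castSucc t) +
              B.mulVec ((K k'.castSucc).mulVec
                (∑ j, w k'.castSucc j • (x j t - x k'.castSucc t)))) s := by
        rw [hM (Y t) k' s]
        have hT : ∀ i' : Fin (N + 1),
            ∑ r, (B * K i') s r * ∑ j, w i' j * ∑ k, Γ i' j k * Y t (k, r)
              = (B.mulVec ((K i').mulVec (∑ j, w i' j • (x j t - x i' t)))) s := by
          intro i'
          rw [Matrix.mulVec_mulVec]
          show _ = ∑ r, (B * K i') s r * (∑ j, w i' j • (x j t - x i' t)) r
          apply Finset.sum_congr rfl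
          intro r _
          congr 1
          have hur : (∑ j, w i' j • (x j t - x i' t)) r
              = ∑ j, w i' j * (x j t r - x i' t r) := by
            simp [Finset.sum_apply]
          rw [hur, hu i' (fun l => x l t r)]
        rw [Finset.sum_congr rfl
          (fun i' _ => congrArg (fun q => pvec i' k' * q) (hT i'))]
        rw [hpv k' (fun i' =>
          (B.mulVec ((K i').mulVec (∑ j, w i' j • (x j t - x i' t)))) s)]
        have hA : ∑ r, A s r * Y t (k', r)
            = (A.mulVec (x (p k') t)) s - (A.mulVec (x k'.castSucc t)) s := by
          show ∑ r, A s r * (x (p k') t r - x k'.castSucc t r)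
              = (∑ r, A s r * x (p k') t r) - ∑ r, A s r * x k'.castSucc t r
          rw [← Finset.sum_sub_distrib]
          exact Finset.sum_congr rfl (fun r _ => by ring)
        rw [hA]
        simp only [Pi.add_apply]
        ring
      rw [heq]
      exact h3
    have hY0 := hstab Y hY
    rw [tendsto_pi_nhds] at hY0
    rw [tendsto_pi_nhds]
    intro s
    simp only [Pi.sub_apply, Pi.zero_apply]
    have hrep : ∀ t, x i t s - x j t s
        = ∑ k, (cvec p hp i k - cvec p hp j k) * Y t (k, s) := by
      intro t
      have h1 : x i t s - x (Fin.last N) t s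
          = ∑ k, cvec p hp i k * (x (p k) t s - x k.castSucc t s) :=
        cvec_sum p hp (fun l => x l t s) i
      have h2 : x j t s - x (Fin.last N) t s
          = ∑ k, cvec p hp j k * (x (p k) t s - x k.castSucc t s) :=
        cvec_sum p hp (fun l => x l t s) j
      calc x i t s - x j t s
          = (x i t s - x (Fin.last N) t s) - (x j t s - x (Fin.last N) t s) := by ring
        _ = ∑ k, (cvec p hp i k - cvec p hp j k) *
              (x (p k) t s - x k.castSucc t s) := by
            rw [h1, h2, ← Finset.sum_sub_distrib]
            apply Finset.sum_congr rfl
            intro k _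
            ring
        _ = ∑ k, (cvec p hp i k - cvec p hp j k) * Y t (k, s) := rfl
    have hlim : Tendsto (fun t => ∑ k, (cvec p hp i k - cvec p hp j k) * Y t (k, s))
        atTop (nhds (∑ k : Fin N, (cvec p hp i k - cvec p hp j k) * 0)) := by
      apply tendsto_finset_sum
      intro k _
      have hk := hY0 (k, s)
      simp only [Pi.zero_apply] at hk
      exact hk.const_mul _
    simp only [mul_zero, Finset.sum_const_zero] at hlim
    exact hlim.congr (fun t => (hrep t).symm)
end
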